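/- Without any support assumption, the bias of the IPS estimator equals ∑_{x∈X} p(x) ∑_{a∈A} π₀(a|x) · w(x,a) · q_A(x,a) − V(π) = − ∑_{x∈X} p(x) ∑_{a ∈ U₀(x)} π(a|x) · q_A(x,a), where U₀(x) := { a ∈ A : π₀(a|x) = 0 } is the set of deficient actions at context x and division by zero is interpreted by the convention c/0 = 0. -/
import Mathlib


open Finset

/-- Vanilla importance weight `w(x,a) = π(a|x)/π₀(a|x)` (with `c/0 = 0`). -/
noncomputable def wA {X A : Type*} (πt π₀ : X → A → ℝ) (x : X) (a : A) : ℝ :=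
  πt x a / π₀ x a

/-- Action-level expected reward `q_A(x,a) = ∑_e φ(e|x,a)·q(x,a,e)`. -/
noncomputable def qA {X A E : Type*} [Fintype E]
    (φ : X → A → E → ℝ) (q : X → A → E → ℝ) (x : X) (a : A) : ℝ :=
  ∑ e, φ x a e * q x a e

/-- Policy value `V(π)`. -/
noncomputable def Vval {X A E : Type*} [Fintype X] [Fintype A] [Fintype E]
    (p : X → ℝ) (πt : X → A → ℝ) (φ : X → A → E → ℝ) (q : X → A → E → ℝ) : ℝ :=
  ∑ x, ∑ a, ∑ e, p x * πt x a * φ x a e * q x a e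

/-- Bias of IPS under deficient support (Sachdeva et al. 2020): the bias of IPS
equals minus the value of the target policy on the deficient actions
`U₀(x) = {a : π₀(a|x) = 0}`. -/
theorem ips_bias_deficient_support
    {X A E : Type*} [Fintype X] [Fintype A] [Fintype E]
    (p : X → ℝ) (πt π₀ : X → A → ℝ) (φ : X → A → E → ℝ) (q : X → A → E → ℝ)
    (hp : ∀ x, 0 ≤ p x) (hp1 : ∑ x, p x = 1)
    (hπt : ∀ x a, 0 ≤ πt x a) (hπt1 : ∀ x, ∑ a, πt x a = 1)
    (hπ₀ : ∀ x a, 0 ≤ π₀ x a) (hπ₀1 : ∀ x, ∑ a, π₀ x a = 1)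
    (hφ : ∀ x a e, 0 ≤ φ x a e) (hφ1 : ∀ x a, ∑ e, φ x a e = 1) :
    (∑ x, p x * ∑ a, π₀ x a * wA πt π₀ x a * qA φ q x a) - Vval p πt φ q =
      - ∑ x, p x * ∑ a ∈ Finset.univ.filter (fun a => π₀ x a = 0),
          πt x a * qA φ q x a := by
  have hV : Vval p πt φ q = ∑ x, p x * ∑ a, πt x a * qA φ q x a := by
    unfold Vval qA
    refine Finset.sum_congr rfl fun x _ => ?_
    rw [Finset.mul_sum]
    refine Finset.sum_congr rfl fun a _ => ?_
    rw [Finset.mul_sum, Finset.mul_sum]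
    refine Finset.sum_congr rfl fun e _ => ?_
    ring
  rw [hV, ← Finset.sum_sub_distrib, ← Finset.sum_neg_distrib]
  refine Finset.sum_congr rfl fun x _ => ?_
  rw [← mul_sub, ← mul_neg]
  congr 1
  rw [← Finset.sum_sub_distrib]
  rw [← Finset.sum_filter_add_sum_filter_not Finset.univ (fun a => π₀ x a = 0)
    (fun a => π₀ x a * wA πt π₀ x a * qA φ q x a - πt x a * qA φ q x a)]
  have h1 : ∀ a ∈ Finset.univ.filter (fun a => π₀ x a = 0),
      π₀ x a * wA πt π₀ x a * qA φ q x a - πt x a * qA φ q x a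
        = -(πt x a * qA φ q x a) := by
    intro a ha
    simp only [Finset.mem_filter] at ha
    rw [ha.2]
    ring
  have h2 : ∀ a ∈ Finset.univ.filter (fun a => ¬ π₀ x a = 0),
      π₀ x a * wA πt π₀ x a * qA φ q x a - πt x a * qA φ q x a = 0 := by
    intro a ha
    simp only [Finset.mem_filter] at ha
    unfold wA
    rw [mul_div_cancel₀ _ ha.2]
    ring
  rw [Finset.sum_congr rfl h1, Finset.sum_congr rfl h2, Finset.sum_const_zero,
    add_zero, Finset.sum_neg_distrib]
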